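/- Let m : ℝ → ℝ be continuous and integrable, and suppose there exists x₀ ∈ ℝ such that m(x) ≤ 0 for all x ≤ x₀ and m(x) ≥ 0 for all x ≥ x₀. Define u(x) := (1/2)∫_ℝ e^{-|x-ξ|} m(ξ) dξ. Then u is bounded and differentiable, u'(x) ≥ -u(x) for every x ≥ x₀, u'(x) ≥ u(x) for every x ≤ x₀, and consequently u'(x) ≥ -sup_{y∈ℝ}|u(y)| for every x ∈ ℝ. -/

import Mathlib

open MeasureTheory Set

private lemma stmt9_Ioi_sub (f : ℝ → ℝ) (h : ∀ x : ℝ, IntegrableOn f (Ioi x))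
    (a b : ℝ) :
    (∫ x in Ioi a, f x) - ∫ x in Ioi b, f x = ∫ x in a..b, f x := by
  wlog hab : a ≤ b generalizing a b
  · rw [intervalIntegral.integral_symm, ← this b a (le_of_not_ge hab), neg_sub]
  rw [intervalIntegral.integral_of_le hab]
  have hset : Ioi a = Ioc a b ∪ Ioi b := (Ioc_union_Ioi_eq_Ioi hab).symm
  rw [hset, setIntegral_union (Ioc_disjoint_Ioi le_rfl) measurableSet_Ioi
      ((h a).mono_set Ioc_subset_Ioi_self) (h b)]
  ring

/-- if `m` is nonpositive to the left of `x₀` and nonnegative to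
its right, then `u = g ∗ m` (with `g(y) = e^{-|y|}/2`) is bounded and
differentiable, `u' ≥ -u` to the right of `x₀`, `u' ≥ u` to its left, and
consequently `u'(x) ≥ -sup_y |u(y)|` everywhere. -/
theorem stmt_9 (m : ℝ → ℝ) (hm : Continuous m) (hmi : Integrable m)
    (x₀ : ℝ) (hneg : ∀ x : ℝ, x ≤ x₀ → m x ≤ 0) (hpos : ∀ x : ℝ, x₀ ≤ x → 0 ≤ m x)
    (u : ℝ → ℝ) (hu : ∀ x : ℝ, u x = (1 / 2) * ∫ ξ : ℝ, Real.exp (-|x - ξ|) * m ξ) :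
    (∃ C : ℝ, ∀ x : ℝ, |u x| ≤ C)
    ∧ (∀ x : ℝ, DifferentiableAt ℝ u x)
    ∧ (∀ x : ℝ, x₀ ≤ x → -u x ≤ deriv u x)
    ∧ (∀ x : ℝ, x ≤ x₀ → u x ≤ deriv u x)
    ∧ (∀ x : ℝ, -(⨆ y : ℝ, |u y|) ≤ deriv u x) := by
  -- basic integrands
  set f : ℝ → ℝ := fun t => Real.exp t * m t with hf
  set g : ℝ → ℝ := fun t => Real.exp (-t) * m t with hg
  have hfc : Continuous f := (Real.continuous_exp).mul hm
  have hgc : Continuous g := (Real.continuous_exp.comp continuous_neg).mul hm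
  -- integrability of the kernel integrand
  have hker : ∀ x : ℝ, Integrable (fun ξ => Real.exp (-|x - ξ|) * m ξ) := by
    intro x
    refine Integrable.mono' hmi.norm
      ((Real.continuous_exp.comp ((continuous_const.sub continuous_id).abs.neg)).mul
        hm).aestronglyMeasurable ?_
    filter_upwards with ξ
    have h1 : Real.exp (-|x - ξ|) ≤ 1 := by
      rw [Real.exp_le_one_iff]; simp [abs_nonneg]
    rw [Real.norm_eq_abs, abs_mul, abs_of_pos (Real.exp_pos _)]
    calc Real.exp (-|x - ξ|) * |m ξ| ≤ 1 * |m ξ| :=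
          mul_le_mul_of_nonneg_right h1 (abs_nonneg _)
      _ = ‖m ξ‖ := by rw [one_mul, Real.norm_eq_abs]
  have hfA : ∀ x : ℝ, IntegrableOn f (Iic x) := by
    intro x
    refine Integrable.mono' ((hmi.norm.const_mul (Real.exp x)).restrict (s := Iic x))
      hfc.aestronglyMeasurable.restrict ?_
    rw [ae_restrict_iff' measurableSet_Iic]
    filter_upwards with ξ hξ
    rw [Real.norm_eq_abs, abs_mul, abs_of_pos (Real.exp_pos _), Real.norm_eq_abs]
    exact mul_le_mul_of_nonneg_right (Real.exp_le_exp.2 hξ) (abs_nonneg _)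
  have hgB : ∀ x : ℝ, IntegrableOn g (Ioi x) := by
    intro x
    refine Integrable.mono' ((hmi.norm.const_mul (Real.exp (-x))).restrict (s := Ioi x))
      hgc.aestronglyMeasurable.restrict ?_
    rw [ae_restrict_iff' measurableSet_Ioi]
    filter_upwards with ξ hξ
    rw [Real.norm_eq_abs, abs_mul, abs_of_pos (Real.exp_pos _), Real.norm_eq_abs]
    exact mul_le_mul_of_nonneg_right (Real.exp_le_exp.2 (by linarith [(mem_Ioi.mp hξ).le])) (abs_nonneg _)
  set A : ℝ → ℝ := fun x => ∫ t in Iic x, f t with hA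
  set B : ℝ → ℝ := fun x => ∫ t in Ioi x, g t with hB
  -- u in terms of A and B
  have huAB : ∀ x : ℝ, u x = (1 / 2) * (Real.exp (-x) * A x + Real.exp x * B x) := by
    intro x
    rw [hu x]
    congr 1
    have hsplit :
        (∫ ξ : ℝ, Real.exp (-|x - ξ|) * m ξ)
          = (∫ ξ in Iic x, Real.exp (-|x - ξ|) * m ξ)
            + ∫ ξ in Ioi x, Real.exp (-|x - ξ|) * m ξ :=
      (intervalIntegral.integral_Iic_add_Ioi ((hker x).integrableOn) ((hker x).integrableOn)).symm
    rw [hsplit]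
    have hL : (∫ ξ in Iic x, Real.exp (-|x - ξ|) * m ξ) = Real.exp (-x) * A x := by
      rw [hA, ← integral_const_mul]
      refine setIntegral_congr_fun measurableSet_Iic fun ξ hξ => ?_
      have : |x - ξ| = x - ξ := abs_of_nonneg (by simp at hξ; linarith)
      rw [this, hf, ← mul_assoc, ← Real.exp_add]
      ring_nf
    have hR : (∫ ξ in Ioi x, Real.exp (-|x - ξ|) * m ξ) = Real.exp x * B x := by
      rw [hB, ← integral_const_mul]
      refine setIntegral_congr_fun measurableSet_Ioi fun ξ hξ => ?_
      have : |x - ξ| = ξ - x := by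
        rw [abs_sub_comm]; exact abs_of_nonneg (by simp at hξ; linarith)
      rw [this, hg, ← mul_assoc, ← Real.exp_add]
      ring_nf
    rw [hL, hR]
  -- derivatives of A and B
  have hAder : ∀ x : ℝ, HasDerivAt A (f x) x := by
    intro x
    have heq : ∀ y : ℝ, A y = A 0 + ∫ t in (0:ℝ)..y, f t := by
      intro y
      rw [← intervalIntegral.integral_Iic_sub_Iic (hfA 0) (hfA y)]
      ring
    have : HasDerivAt (fun y => A 0 + ∫ t in (0:ℝ)..y, f t) (f x) x := by
      have := (intervalIntegral.integral_hasDerivAt_right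
        (hfc.intervalIntegrable 0 x)
        (hfc.aestronglyMeasurable.stronglyMeasurableAtFilter)
        hfc.continuousAt)
      exact (this.const_add (A 0))
    exact this.congr_of_eventuallyEq (Filter.Eventually.of_forall fun y => (heq y))
  have hBder : ∀ x : ℝ, HasDerivAt B (-(g x)) x := by
    intro x
    have heq : ∀ y : ℝ, B y = B 0 - ∫ t in (0:ℝ)..y, g t := by
      intro y
      rw [← stmt9_Ioi_sub g hgB 0 y]
      ring
    have : HasDerivAt (fun y => B 0 - ∫ t in (0:ℝ)..y, g t) (-(g x)) x := by
      have h2 := (intervalIntegral.integral_hasDerivAt_right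
        (hgc.intervalIntegrable 0 x)
        (hgc.aestronglyMeasurable.stronglyMeasurableAtFilter)
        hgc.continuousAt)
      exact (h2.const_sub (B 0))
    exact this.congr_of_eventuallyEq (Filter.Eventually.of_forall fun y => (heq y))
  -- derivative of u
  have huder : ∀ x : ℝ, HasDerivAt u
      ((1 / 2) * (Real.exp x * B x - Real.exp (-x) * A x)) x := by
    intro x
    have hexp1 : HasDerivAt (fun y : ℝ => Real.exp (-y)) (-(Real.exp (-x))) x := by
      have := (Real.hasDerivAt_exp (-x)).comp x ((hasDerivAt_id x).neg)
      simpa [Function.comp_def] using this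
    have hexp2 : HasDerivAt Real.exp (Real.exp x) x := Real.hasDerivAt_exp x
    have h1 : HasDerivAt (fun y => Real.exp (-y) * A y)
        (-(Real.exp (-x)) * A x + Real.exp (-x) * f x) x := hexp1.mul (hAder x)
    have h2 : HasDerivAt (fun y => Real.exp y * B y)
        (Real.exp x * B x + Real.exp x * (-(g x))) x := hexp2.mul (hBder x)
    have h3 := ((h1.add h2).const_mul (1 / 2 : ℝ))
    have h4 : HasDerivAt (fun y => (1 / 2) * (Real.exp (-y) * A y + Real.exp y * B y))
        ((1 / 2) * (Real.exp x * B x - Real.exp (-x) * A x)) x := by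
      convert h3 using 1
      case e'_4 => rfl
      case e'_5 => rfl
      case e'_8 => rfl
      have e1 : Real.exp (-x) * f x = m x := by
        rw [hf, ← mul_assoc, ← Real.exp_add]; simp
      have e2 : Real.exp x * (-(g x)) = -(m x) := by
        rw [hg, neg_mul_eq_mul_neg, ← mul_assoc, ← Real.exp_add]; simp
      rw [e1]
      nlinarith [e1, e2]
    exact h4.congr_of_eventuallyEq (Filter.Eventually.of_forall fun y => (huAB y))
  have hderiv : ∀ x : ℝ, deriv u x
      = (1 / 2) * (Real.exp x * B x - Real.exp (-x) * A x) :=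
    fun x => (huder x).deriv
  have hdiff : ∀ x : ℝ, DifferentiableAt ℝ u x := fun x => (huder x).differentiableAt
  -- bound
  have hbound : ∀ x : ℝ, |u x| ≤ (1 / 2) * ∫ ξ : ℝ, |m ξ| := by
    intro x
    rw [hu x, abs_mul, abs_of_pos (by norm_num : (0:ℝ) < 1 / 2)]
    have h1 : |∫ ξ : ℝ, Real.exp (-|x - ξ|) * m ξ| ≤ ∫ ξ : ℝ, |Real.exp (-|x - ξ|) * m ξ| := by
      have := norm_integral_le_integral_norm (μ := volume) (fun ξ => Real.exp (-|x - ξ|) * m ξ)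
      simpa only [Real.norm_eq_abs] using this
    have h2 : (∫ ξ : ℝ, |Real.exp (-|x - ξ|) * m ξ|) ≤ ∫ ξ : ℝ, |m ξ| := by
      refine integral_mono (hker x).abs hmi.abs fun ξ => ?_
      rw [abs_mul, abs_of_pos (Real.exp_pos _)]
      have h1 : Real.exp (-|x - ξ|) ≤ 1 := by
        rw [Real.exp_le_one_iff]; simp [abs_nonneg]
      calc Real.exp (-|x - ξ|) * |m ξ| ≤ 1 * |m ξ| :=
            mul_le_mul_of_nonneg_right h1 (abs_nonneg _)
        _ = |m ξ| := one_mul _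
    have := le_trans h1 h2
    nlinarith
  -- sign conditions
  have hBpos : ∀ x : ℝ, x₀ ≤ x → 0 ≤ B x := by
    intro x hx
    refine setIntegral_nonneg measurableSet_Ioi fun ξ hξ => ?_
    exact mul_nonneg (Real.exp_pos _).le (hpos ξ (by simp at hξ; linarith))
  have hAneg : ∀ x : ℝ, x ≤ x₀ → A x ≤ 0 := by
    intro x hx
    refine setIntegral_nonpos measurableSet_Iic fun ξ hξ => ?_
    exact mul_nonpos_of_nonneg_of_nonpos (Real.exp_pos _).le
      (hneg ξ (by simp at hξ; linarith))
  have hright : ∀ x : ℝ, x₀ ≤ x → -u x ≤ deriv u x := by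
    intro x hx
    rw [hderiv x, huAB x]
    have h1 := hBpos x hx
    nlinarith [Real.exp_pos x]
  have hleft : ∀ x : ℝ, x ≤ x₀ → u x ≤ deriv u x := by
    intro x hx
    rw [hderiv x, huAB x]
    have h1 := hAneg x hx
    nlinarith [Real.exp_pos (-x)]
  refine ⟨⟨(1 / 2) * ∫ ξ : ℝ, |m ξ|, hbound⟩, hdiff, hright, hleft, ?_⟩
  intro x
  have hbdd : BddAbove (Set.range fun y => |u y|) :=
    ⟨(1 / 2) * ∫ ξ : ℝ, |m ξ|, by rintro _ ⟨y, rfl⟩; exact hbound y⟩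
  have hsup : |u x| ≤ ⨆ y : ℝ, |u y| := le_ciSup hbdd x
  rcases le_total x x₀ with h | h
  · have := hleft x h
    have h2 : -|u x| ≤ u x := neg_abs_le _
    linarith
  · have := hright x h
    have h2 : -|u x| ≤ -u x := by
      have := le_abs_self (u x); linarith
    linarith
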